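/- Fix k ≥ 1, q ∈ (0,1), a partition λ ⊢ k of length ℓ, and complex numbers w_1,…,w_ℓ such that every denominator below is nonzero at the substitution. Let y_1,…,y_k be given by the q-string substitution y_{s_j+m} = q^{m−1}·w_j. Then the value of ∏_{1≤i<j≤k} (1 − y_i y_j)² / [(q − y_i y_j)(1 − q·y_i y_j)] at this substitution equals q^{−k²/2}·q^{k/2} ∏_{j=1}^{ℓ} [(1 − q^{λ_j}·w_j²/q)/(1 − w_j²/q)] · [(w_j²/q; q²)_{λ_j} / (w_j²; q²)_{λ_j}] · ∏_{1≤i<j≤ℓ} [(1 − q^{λ_i}·w_i w_j/q)(1 − q^{λ_j}·w_i w_j/q)] / [(1 − w_i w_j/q)(1 − q^{λ_i+λ_j}·w_i w_j/q)]. -/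

import Mathlib

open Finset

/-- Row telescoping identity in `Multiset ℕ`. -/
lemma row_M (A b : ℕ) :
    (∑ a ∈ range A, 2 • ({a+b+1} : Multiset ℕ)) + ({b} + {A+b+1}) =
    ({b+1} + {A+b}) + ∑ a ∈ range A, (({a+b} : Multiset ℕ) + {a+b+2}) := by
  induction A with
  | zero => simp; exact Multiset.cons_swap _ _ _
  | succ A ih =>
    rw [sum_range_succ, sum_range_succ]
    have e1 : A+1+b+1 = A+b+2 := by omega
    have e2 : A+1+b = A+b+1 := by omega
    rw [e1, e2]
    calc (∑ a ∈ range A, 2 • ({a+b+1} : Multiset ℕ)) + 2 • ({A+b+1} : Multiset ℕ) + ({b} + {A+b+2})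
        = ((∑ a ∈ range A, 2 • ({a+b+1} : Multiset ℕ)) + ({b} + {A+b+1}))
            + ({A+b+1} + {A+b+2}) := by abel
      _ = (({b+1} + {A+b}) + ∑ a ∈ range A, (({a+b} : Multiset ℕ) + {a+b+2}))
            + ({A+b+1} + {A+b+2}) := by rw [ih]
      _ = ({b+1} + {A+b+1}) + ((∑ a ∈ range A, (({a+b} : Multiset ℕ) + {a+b+2})) + ({A+b} + {A+b+2})) := by abel

/-- Cross-block telescoping identity in `Multiset ℕ`. -/
lemma lemA_M (A B : ℕ) :
    (∑ b ∈ range B, ∑ a ∈ range A, 2 • ({a+b+1} : Multiset ℕ)) + ({0} + {A+B}) =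
    ({A} + {B}) + ∑ b ∈ range B, ∑ a ∈ range A, (({a+b} : Multiset ℕ) + {a+b+2}) := by
  induction B with
  | zero => simp; exact Multiset.cons_swap _ _ _
  | succ B ih =>
    rw [sum_range_succ, sum_range_succ]
    apply add_right_cancel (b := ({B} : Multiset ℕ) + {A+B})
    have e1 : A+(B+1) = A+B+1 := by omega
    rw [e1]
    calc (∑ b ∈ range B, ∑ a ∈ range A, 2 • ({a+b+1} : Multiset ℕ))
            + (∑ a ∈ range A, 2 • ({a+B+1} : Multiset ℕ)) + ({0} + {A+B+1}) + ({B} + {A+B})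
        = ((∑ b ∈ range B, ∑ a ∈ range A, 2 • ({a+b+1} : Multiset ℕ)) + ({0} + {A+B}))
            + ((∑ a ∈ range A, 2 • ({a+B+1} : Multiset ℕ)) + ({B} + {A+B+1})) := by abel
      _ = (({A} + {B}) + ∑ b ∈ range B, ∑ a ∈ range A, (({a+b} : Multiset ℕ) + {a+b+2}))
            + (({B+1} + {A+B}) + ∑ a ∈ range A, (({a+B} : Multiset ℕ) + {a+B+2})) := by
              rw [ih, row_M A B]
      _ = ({A} + {B+1})
            + ((∑ b ∈ range B, ∑ a ∈ range A, (({a+b} : Multiset ℕ) + {a+b+2}))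
              + ∑ a ∈ range A, (({a+B} : Multiset ℕ) + {a+B+2})) + ({B} + {A+B}) := by abel

/-- Diagonal-block telescoping identity in `Multiset ℕ`. -/
lemma lemB_M (n : ℕ) :
    (∑ b ∈ range n, ∑ a ∈ range b, 2 • ({a+b+1} : Multiset ℕ)) + ({0} + ∑ i ∈ range n, ({2*i+1} : Multiset ℕ)) =
    ({n} + ∑ i ∈ range n, ({2*i} : Multiset ℕ)) + ∑ b ∈ range n, ∑ a ∈ range b, (({a+b} : Multiset ℕ) + {a+b+2}) := by
  induction n with
  | zero => simp
  | succ n ih =>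
    rw [sum_range_succ, sum_range_succ, sum_range_succ, sum_range_succ]
    apply add_right_cancel (b := ({n} : Multiset ℕ))
    have e1 : 2*n+1 = n+n+1 := by omega
    have e2 : 2*n = n+n := by omega
    rw [e1, e2]
    calc (∑ b ∈ range n, ∑ a ∈ range b, 2 • ({a+b+1} : Multiset ℕ))
            + (∑ a ∈ range n, 2 • ({a+n+1} : Multiset ℕ))
            + ({0} + ((∑ i ∈ range n, ({2*i+1} : Multiset ℕ)) + {n+n+1})) + {n}
        = ((∑ b ∈ range n, ∑ a ∈ range b, 2 • ({a+b+1} : Multiset ℕ))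
            + ({0} + ∑ i ∈ range n, ({2*i+1} : Multiset ℕ)))
          + ((∑ a ∈ range n, 2 • ({a+n+1} : Multiset ℕ)) + ({n} + {n+n+1})) := by abel
      _ = (({n} + ∑ i ∈ range n, ({2*i} : Multiset ℕ))
            + ∑ b ∈ range n, ∑ a ∈ range b, (({a+b} : Multiset ℕ) + {a+b+2}))
          + (({n+1} + {n+n}) + ∑ a ∈ range n, (({a+n} : Multiset ℕ) + {a+n+2})) := by
            rw [ih, row_M n n]
      _ = ({n+1} + ((∑ i ∈ range n, ({2*i} : Multiset ℕ)) + {n+n}))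
          + ((∑ b ∈ range n, ∑ a ∈ range b, (({a+b} : Multiset ℕ) + {a+b+2}))
            + ∑ a ∈ range n, (({a+n} : Multiset ℕ) + {a+n+2})) + {n} := by abel

/-- Evaluate a multiset of indices through `f` and take the product. -/
noncomputable def msP (f : ℕ → ℂ) (m : Multiset ℕ) : ℂ := (m.map f).prod

lemma msP_add (f : ℕ → ℂ) (m n : Multiset ℕ) : msP f (m + n) = msP f m * msP f n := by
  simp [msP, Multiset.map_add, ]

lemma msP_single (f : ℕ → ℂ) (s : ℕ) : msP f {s} = f s := by
  simp [msP]

lemma msP_smul2 (f : ℕ → ℂ) (m : Multiset ℕ) : msP f (2 • m) = msP f m ^ 2 := by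
  rw [two_smul, msP_add, sq]

lemma msP_cons (f : ℕ → ℂ) (a : ℕ) (m : Multiset ℕ) : msP f (a ::ₘ m) = f a * msP f m := by
  simp [msP]

lemma msP_sum (f : ℕ → ℂ) {ι : Type*} (s : Finset ι) (F : ι → Multiset ℕ) :
    msP f (∑ i ∈ s, F i) = ∏ i ∈ s, msP f (F i) := by
  classical
  induction s using Finset.induction_on with
  | empty => simp [msP]
  | insert _ _ h ih => rw [Finset.sum_insert h, Finset.prod_insert h, msP_add, ih]

/-- Cross-block telescoping identity over `ℂ`. -/
lemma lemA_C (f : ℕ → ℂ) (A B : ℕ) :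
    (∏ b ∈ range B, ∏ a ∈ range A, f (a+b+1)^2) * (f 0 * f (A+B)) =
    (f A * f B) * ∏ b ∈ range B, ∏ a ∈ range A, (f (a+b) * f (a+b+2)) := by
  have h := congrArg (msP f) (lemA_M A B)
  simpa [msP_cons, msP_add, msP_sum, msP_smul2, msP_single, mul_comm, mul_left_comm, mul_assoc] using h

/-- Diagonal-block telescoping identity over `ℂ`. -/
lemma lemB_C (f : ℕ → ℂ) (n : ℕ) :
    (∏ b ∈ range n, ∏ a ∈ range b, f (a+b+1)^2) * (f 0 * ∏ i ∈ range n, f (2*i+1)) =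
    (f n * ∏ i ∈ range n, f (2*i)) * ∏ b ∈ range n, ∏ a ∈ range b, (f (a+b) * f (a+b+2)) := by
  have h := congrArg (msP f) (lemB_M n)
  simpa [msP_cons, msP_add, msP_sum, msP_smul2, msP_single, mul_comm, mul_left_comm, mul_assoc] using h

/-- Cross-block evaluation in division form. -/
lemma cross_val (f : ℕ → ℂ) (A B : ℕ)
    (hd : ∀ b < B, ∀ a < A, f (a+b) ≠ 0 ∧ f (a+b+2) ≠ 0)
    (h0 : f 0 ≠ 0) (hAB : f (A+B) ≠ 0) :
    ∏ b ∈ range B, ∏ a ∈ range A, (f (a+b+1)^2 / (f (a+b) * f (a+b+2))) =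
    (f A * f B) / (f 0 * f (A+B)) := by
  have hD : (∏ b ∈ range B, ∏ a ∈ range A, (f (a+b) * f (a+b+2))) ≠ 0 := by
    apply Finset.prod_ne_zero_iff.2
    intro b hb
    apply Finset.prod_ne_zero_iff.2
    intro a ha
    exact mul_ne_zero (hd b (mem_range.mp hb) a (mem_range.mp ha)).1
      (hd b (mem_range.mp hb) a (mem_range.mp ha)).2
  have hX : (f 0 * f (A+B)) ≠ 0 := mul_ne_zero h0 hAB
  have : ∏ b ∈ range B, ∏ a ∈ range A, (f (a+b+1)^2 / (f (a+b) * f (a+b+2))) =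
      (∏ b ∈ range B, ∏ a ∈ range A, f (a+b+1)^2) /
      (∏ b ∈ range B, ∏ a ∈ range A, (f (a+b) * f (a+b+2))) := by
    rw [← Finset.prod_div_distrib]
    exact Finset.prod_congr rfl fun b _ => by rw [Finset.prod_div_distrib]
  rw [this, div_eq_div_iff hD hX]
  exact lemA_C f A B

/-- Diagonal-block evaluation in division form. -/
lemma diag_val (f : ℕ → ℂ) (n : ℕ)
    (hd : ∀ b < n, ∀ a < b, f (a+b) ≠ 0 ∧ f (a+b+2) ≠ 0)
    (h0 : f 0 ≠ 0) (hodd : (∏ i ∈ range n, f (2*i+1)) ≠ 0) :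
    ∏ b ∈ range n, ∏ a ∈ range b, (f (a+b+1)^2 / (f (a+b) * f (a+b+2))) =
    (f n * ∏ i ∈ range n, f (2*i)) / (f 0 * ∏ i ∈ range n, f (2*i+1)) := by
  have hD : (∏ b ∈ range n, ∏ a ∈ range b, (f (a+b) * f (a+b+2))) ≠ 0 := by
    apply Finset.prod_ne_zero_iff.2
    intro b hb
    apply Finset.prod_ne_zero_iff.2
    intro a ha
    exact mul_ne_zero (hd b (mem_range.mp hb) a (mem_range.mp ha)).1
      (hd b (mem_range.mp hb) a (mem_range.mp ha)).2
  have hX : (f 0 * ∏ i ∈ range n, f (2*i+1)) ≠ 0 := mul_ne_zero h0 hodd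
  have : ∏ b ∈ range n, ∏ a ∈ range b, (f (a+b+1)^2 / (f (a+b) * f (a+b+2))) =
      (∏ b ∈ range n, ∏ a ∈ range b, f (a+b+1)^2) /
      (∏ b ∈ range n, ∏ a ∈ range b, (f (a+b) * f (a+b+2))) := by
    rw [← Finset.prod_div_distrib]
    exact Finset.prod_congr rfl fun b _ => by rw [Finset.prod_div_distrib]
  rw [this, div_eq_div_iff hD hX]
  exact lemB_C f n

/-- Splitting a product over an initial segment given by partial sums into blocks. -/
lemma sum_block_prod (lam' : ℕ → ℕ) (H : ℕ → ℂ) (L : ℕ) :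
    ∏ i ∈ range (∑ u ∈ range L, lam' u), H i =
    ∏ t ∈ range L, ∏ a ∈ range (lam' t), H ((∑ u ∈ range t, lam' u) + a) := by
  induction L with
  | zero => simp
  | succ L ih =>
    rw [sum_range_succ, Finset.prod_range_add, ih, prod_range_succ]

/-- Block decomposition of the triangular double product. -/
lemma block_decomp (lam' : ℕ → ℕ) (G : ℕ → ℕ → ℂ) (L : ℕ) :
    ∏ j ∈ range (∑ u ∈ range L, lam' u), ∏ i ∈ range j, G i j =
    (∏ t ∈ range L, ∏ b ∈ range (lam' t), ∏ a ∈ range b,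
        G ((∑ u ∈ range t, lam' u) + a) ((∑ u ∈ range t, lam' u) + b)) *
    ∏ t2 ∈ range L, ∏ t1 ∈ range t2, ∏ b ∈ range (lam' t2), ∏ a ∈ range (lam' t1),
        G ((∑ u ∈ range t1, lam' u) + a) ((∑ u ∈ range t2, lam' u) + b) := by
  induction L with
  | zero => simp
  | succ L ih =>
    rw [sum_range_succ, Finset.prod_range_add, ih, prod_range_succ, prod_range_succ]
    have h1 : (∏ b ∈ range (lam' L), ∏ i ∈ range ((∑ u ∈ range L, lam' u) + b), G i ((∑ u ∈ range L, lam' u) + b))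
        = (∏ b ∈ range (lam' L), (∏ t1 ∈ range L, ∏ a ∈ range (lam' t1), G ((∑ u ∈ range t1, lam' u) + a) ((∑ u ∈ range L, lam' u) + b))
            * ∏ a ∈ range b, G ((∑ u ∈ range L, lam' u) + a) ((∑ u ∈ range L, lam' u) + b)) :=
      Finset.prod_congr rfl fun b _ => by rw [Finset.prod_range_add, sum_block_prod]
    rw [h1, Finset.prod_mul_distrib]
    rw [Finset.prod_comm (s := range (lam' L)) (t := range L)]
    ring

/-- Reorder a strict upper-triangular double product into nested triangular form. -/
lemma pair_reorder (n : ℕ) (F : ℕ → ℕ → ℂ) :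
    ∏ i ∈ range n, ∏ j ∈ range n, (if i < j then F i j else 1) =
    ∏ j ∈ range n, ∏ i ∈ range j, F i j := by
  rw [Finset.prod_comm]
  refine Finset.prod_congr rfl fun j hj => ?_
  rw [← Finset.prod_filter]
  congr 1
  ext x
  simp only [mem_filter, mem_range]
  have := mem_range.mp hj
  omega

/-- Pointwise rewriting of the factor into telescoping form. -/
lemma fq_eq (q z : ℂ) (hq : q ≠ 0) (s : ℕ) :
    (1 - q^s*z)^2 / ((q - q^s*z) * (1 - q*(q^s*z)))
    = q⁻¹ * ((1 - q^(s+1)*z/q)^2 / ((1 - q^s*z/q) * (1 - q^(s+2)*z/q))) := by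
  have h1 : q^(s+1)*z/q = q^s*z := by
    rw [pow_succ]; field_simp
  have h2 : q - q^s*z = q * (1 - q^s*z/q) := by
    field_simp
  have h3 : 1 - q*(q^s*z) = 1 - q^(s+2)*z/q := by
    rw [pow_succ, pow_succ]; field_simp
  rw [h1, h2, ← h3]
  simp only [div_eq_mul_inv, mul_inv]
  ring

/-- Total exponent count. -/
lemma exp_sum (lam' : ℕ → ℕ) (L : ℕ) :
    (∑ t ∈ range L, ∑ b ∈ range (lam' t), b)
      + (∑ t2 ∈ range L, ∑ t1 ∈ range t2, lam' t1 * lam' t2)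
    = ∑ b ∈ range (∑ u ∈ range L, lam' u), b := by
  induction L with
  | zero => simp
  | succ L ih =>
    rw [sum_range_succ, sum_range_succ, sum_range_succ, Finset.sum_range_add]
    rw [← ih, ← Finset.sum_mul]
    have : (∑ i ∈ range (lam' L), ((∑ u ∈ range L, lam' u) + i))
        = (lam' L) * (∑ u ∈ range L, lam' u) + ∑ i ∈ range (lam' L), i := by
      rw [Finset.sum_add_distrib, Finset.sum_const, card_range, smul_eq_mul]
    rw [this]
    ring

lemma psi_d1 (q z : ℂ) (hq : q ≠ 0) (s : ℕ) : q - q^s*z = q * (1 - q^s*z/q) := by field_simp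

lemma psi_d2 (q z : ℂ) (hq : q ≠ 0) (s : ℕ) : 1 - q*(q^s*z) = 1 - q^(s+2)*z/q := by
  rw [pow_succ, pow_succ]; field_simp

lemma psi_odd (q z : ℂ) (hq : q ≠ 0) (i : ℕ) : 1 - q^(2*i+1)*z/q = 1 - (q^2)^i * z := by
  rw [pow_succ, ← pow_mul]; field_simp

lemma psi_even (q z : ℂ) (i : ℕ) : 1 - q^(2*i)*z/q = 1 - (q^2)^i * (z/q) := by
  rw [← pow_mul, mul_div_assoc]

/-- Evaluation of a diagonal block. -/
lemma diag_block_eval (q z : ℂ) (hq : q ≠ 0) (n : ℕ)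
    (hd : ∀ b < n, ∀ a < b, (q - q^(a+b)*z ≠ 0) ∧ (1 - q*(q^(a+b)*z) ≠ 0))
    (h0 : 1 - z/q ≠ 0)
    (hodd : (∏ i ∈ range n, (1 - (q^2)^i * z)) ≠ 0) :
    ∏ b ∈ range n, ∏ a ∈ range b,
        ((1 - q^(a+b)*z)^2/((q - q^(a+b)*z)*(1 - q*(q^(a+b)*z))))
    = (q⁻¹)^(∑ b ∈ range n, b) *
      (((1 - q^n * (z/q))/(1 - z/q)) *
        ((∏ i ∈ range n, (1 - (q^2)^i * (z/q)))/(∏ i ∈ range n, (1 - (q^2)^i * z)))) := by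
  have hf0 : (1 : ℂ) - q^0*z/q = 1 - z/q := by rw [pow_zero, one_mul]
  have step1 : ∏ b ∈ range n, ∏ a ∈ range b,
        ((1 - q^(a+b)*z)^2/((q - q^(a+b)*z)*(1 - q*(q^(a+b)*z))))
      = ∏ b ∈ range n, ((q⁻¹)^b * ∏ a ∈ range b,
          ((1 - q^(a+b+1)*z/q)^2 / ((1 - q^(a+b)*z/q) * (1 - q^(a+b+2)*z/q)))) := by
    refine Finset.prod_congr rfl fun b _ => ?_
    rw [Finset.prod_congr rfl fun a (_ : a ∈ range b) => fq_eq q z hq (a+b),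
      Finset.prod_mul_distrib, Finset.prod_const, card_range]
  rw [step1, Finset.prod_mul_distrib, Finset.prod_pow_eq_pow_sum]
  congr 1
  have hdv := diag_val (fun s => 1 - q^s*z/q) n ?_ ?_ ?_
  · rw [hdv]
    rw [div_mul_div_comm]
    congr 1
    · congr 1
      · rw [mul_div_assoc]
      · exact Finset.prod_congr rfl fun i _ => psi_even q z i
    · rw [hf0]
      congr 1
      exact Finset.prod_congr rfl fun i _ => psi_odd q z hq i
  · intro b hb a ha
    constructor
    · intro h
      exact (hd b hb a ha).1
        (by rw [psi_d1 q z hq (a+b), show (1 - q^(a+b)*z/q) = (0:ℂ) from h, mul_zero])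
    · intro h
      exact (hd b hb a ha).2 (by rw [psi_d2 q z hq (a+b)]; exact h)
  · simpa [hf0] using h0
  · simpa only [psi_odd q z hq] using hodd

/-- Evaluation of a cross block. -/
lemma cross_block_eval (q z : ℂ) (hq : q ≠ 0) (A B : ℕ)
    (hd : ∀ b < B, ∀ a < A, (q - q^(a+b)*z ≠ 0) ∧ (1 - q*(q^(a+b)*z) ≠ 0))
    (h0 : 1 - z/q ≠ 0) (hAB : 1 - q^(A+B)*(z/q) ≠ 0) :
    ∏ b ∈ range B, ∏ a ∈ range A,
        ((1 - q^(a+b)*z)^2/((q - q^(a+b)*z)*(1 - q*(q^(a+b)*z))))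
    = (q⁻¹)^(A*B) *
      (((1 - q^A*(z/q))*(1 - q^B*(z/q))) / ((1 - z/q)*(1 - q^(A+B)*(z/q)))) := by
  have hf0 : (1 : ℂ) - q^0*z/q = 1 - z/q := by rw [pow_zero, one_mul]
  have step1 : ∏ b ∈ range B, ∏ a ∈ range A,
        ((1 - q^(a+b)*z)^2/((q - q^(a+b)*z)*(1 - q*(q^(a+b)*z))))
      = ∏ b ∈ range B, ((q⁻¹)^A * ∏ a ∈ range A,
          ((1 - q^(a+b+1)*z/q)^2 / ((1 - q^(a+b)*z/q) * (1 - q^(a+b+2)*z/q)))) := by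
    refine Finset.prod_congr rfl fun b _ => ?_
    rw [Finset.prod_congr rfl fun a (_ : a ∈ range A) => fq_eq q z hq (a+b),
      Finset.prod_mul_distrib, Finset.prod_const, card_range]
  rw [step1, Finset.prod_mul_distrib, Finset.prod_const, card_range, ← pow_mul]
  congr 1
  have hcv := cross_val (fun s => 1 - q^s*z/q) A B ?_ ?_ ?_
  · rw [hcv, mul_div_assoc ((q:ℂ)^A), mul_div_assoc ((q:ℂ)^B), mul_div_assoc ((q:ℂ)^(A+B)), hf0]
  · intro b hb a ha
    constructor
    · intro h
      exact (hd b hb a ha).1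
        (by rw [psi_d1 q z hq (a+b), show (1 - q^(a+b)*z/q) = (0:ℂ) from h, mul_zero])
    · intro h
      exact (hd b hb a ha).2 (by rw [psi_d2 q z hq (a+b)]; exact h)
  · simpa [hf0] using h0
  · simpa only [mul_div_assoc] using hAB

lemma main_range (q : ℂ) (hq : q ≠ 0) (L : ℕ) (lam' : ℕ → ℕ) (w' : ℕ → ℂ) (Y : ℕ → ℂ)
    (hY : ∀ t < L, ∀ m < lam' t, Y ((∑ u ∈ range t, lam' u) + m) = q^m * w' t)
    (hd1 : ∀ i j : ℕ, i < j → j < (∑ u ∈ range L, lam' u) →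
      (q - Y i * Y j ≠ 0 ∧ 1 - q * (Y i * Y j) ≠ 0))
    (hd2 : ∀ t < L, 1 - (w' t)^2 / q ≠ 0)
    (hd3 : ∀ t < L, (∏ i ∈ range (lam' t), (1 - (q^2)^i * (w' t)^2)) ≠ 0)
    (hd4 : ∀ t1 t2 : ℕ, t2 < L → t1 < t2 →
      (1 - w' t1 * w' t2 / q ≠ 0 ∧ 1 - q^(lam' t1 + lam' t2) * (w' t1 * w' t2 / q) ≠ 0)) :
    ∏ j ∈ range (∑ u ∈ range L, lam' u), ∏ i ∈ range j,
      ((1 - Y i * Y j)^2 / ((q - Y i * Y j) * (1 - q * (Y i * Y j))))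
    = (q⁻¹)^(∑ b ∈ range (∑ u ∈ range L, lam' u), b) *
      (∏ t ∈ range L, ((1 - q^(lam' t) * ((w' t)^2 / q)) / (1 - (w' t)^2/q)) *
        ((∏ i ∈ range (lam' t), (1 - (q^2)^i * ((w' t)^2/q))) /
         (∏ i ∈ range (lam' t), (1 - (q^2)^i * (w' t)^2)))) *
      (∏ t2 ∈ range L, ∏ t1 ∈ range t2,
        ((1 - q^(lam' t1) * (w' t1 * w' t2 / q)) * (1 - q^(lam' t2) * (w' t1 * w' t2 / q))) /
        ((1 - w' t1 * w' t2 / q) * (1 - q^(lam' t1 + lam' t2) * (w' t1 * w' t2 / q)))) := by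
  have hSmono : ∀ {t1 t2 : ℕ}, t1 ≤ t2 →
      (∑ u ∈ range t1, lam' u) ≤ ∑ u ∈ range t2, lam' u :=
    fun h => Finset.sum_le_sum_of_subset (Finset.range_subset_range.mpr h)
  have hblock := block_decomp lam'
    (fun i j => (1 - Y i * Y j)^2 / ((q - Y i * Y j) * (1 - q * (Y i * Y j)))) L
  rw [hblock]
  -- diagonal blocks
  have hdiag : ∀ t ∈ range L,
      (∏ b ∈ range (lam' t), ∏ a ∈ range b,
        ((1 - Y ((∑ u ∈ range t, lam' u) + a) * Y ((∑ u ∈ range t, lam' u) + b))^2 /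
          ((q - Y ((∑ u ∈ range t, lam' u) + a) * Y ((∑ u ∈ range t, lam' u) + b)) *
            (1 - q * (Y ((∑ u ∈ range t, lam' u) + a) * Y ((∑ u ∈ range t, lam' u) + b))))))
      = (q⁻¹)^(∑ b ∈ range (lam' t), b) *
        (((1 - q^(lam' t) * ((w' t)^2 / q)) / (1 - (w' t)^2/q)) *
          ((∏ i ∈ range (lam' t), (1 - (q^2)^i * ((w' t)^2/q))) /
           (∏ i ∈ range (lam' t), (1 - (q^2)^i * (w' t)^2)))) := by
    intro t ht
    have ht' := mem_range.mp ht
    have hYab : ∀ b < lam' t, ∀ a < b,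
        Y ((∑ u ∈ range t, lam' u) + a) * Y ((∑ u ∈ range t, lam' u) + b)
          = q^(a+b) * ((w' t)^2) := by
      intro b hb a ha
      rw [hY t ht' a (lt_trans ha hb), hY t ht' b hb, pow_add]
      ring
    have hjlt : ∀ b < lam' t, (∑ u ∈ range t, lam' u) + b < ∑ u ∈ range L, lam' u := by
      intro b hb
      calc (∑ u ∈ range t, lam' u) + b < (∑ u ∈ range t, lam' u) + lam' t := by omega
        _ = ∑ u ∈ range (t+1), lam' u := (sum_range_succ _ _).symm
        _ ≤ ∑ u ∈ range L, lam' u := hSmono ht'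
    rw [Finset.prod_congr rfl (fun b hb => Finset.prod_congr rfl fun a ha => by
      rw [hYab b (mem_range.mp hb) a (mem_range.mp ha)])]
    refine diag_block_eval q ((w' t)^2) hq (lam' t) ?_ (hd2 t ht') (hd3 t ht')
    intro b hb a ha
    have h1 := hd1 ((∑ u ∈ range t, lam' u) + a) ((∑ u ∈ range t, lam' u) + b)
      (by omega) (hjlt b hb)
    rw [hYab b hb a ha] at h1
    exact h1
  -- cross blocks
  have hcross : ∀ t2 ∈ range L, ∀ t1 ∈ range t2,
      (∏ b ∈ range (lam' t2), ∏ a ∈ range (lam' t1),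
        ((1 - Y ((∑ u ∈ range t1, lam' u) + a) * Y ((∑ u ∈ range t2, lam' u) + b))^2 /
          ((q - Y ((∑ u ∈ range t1, lam' u) + a) * Y ((∑ u ∈ range t2, lam' u) + b)) *
            (1 - q * (Y ((∑ u ∈ range t1, lam' u) + a) * Y ((∑ u ∈ range t2, lam' u) + b))))))
      = (q⁻¹)^(lam' t1 * lam' t2) *
        (((1 - q^(lam' t1) * (w' t1 * w' t2 / q)) * (1 - q^(lam' t2) * (w' t1 * w' t2 / q))) /
          ((1 - w' t1 * w' t2 / q) * (1 - q^(lam' t1 + lam' t2) * (w' t1 * w' t2 / q)))) := by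
    intro t2 ht2 t1 ht1
    have ht2' := mem_range.mp ht2
    have ht1' := mem_range.mp ht1
    have ht1L : t1 < L := lt_trans ht1' ht2'
    have hYab : ∀ b < lam' t2, ∀ a < lam' t1,
        Y ((∑ u ∈ range t1, lam' u) + a) * Y ((∑ u ∈ range t2, lam' u) + b)
          = q^(a+b) * (w' t1 * w' t2) := by
      intro b hb a ha
      rw [hY t1 ht1L a ha, hY t2 ht2' b hb, pow_add]
      ring
    have hilt : ∀ a < lam' t1, (∑ u ∈ range t1, lam' u) + a < ∑ u ∈ range t2, lam' u := by
      intro a ha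
      calc (∑ u ∈ range t1, lam' u) + a < (∑ u ∈ range t1, lam' u) + lam' t1 := by omega
        _ = ∑ u ∈ range (t1+1), lam' u := (sum_range_succ _ _).symm
        _ ≤ ∑ u ∈ range t2, lam' u := hSmono ht1'
    have hjlt : ∀ b < lam' t2, (∑ u ∈ range t2, lam' u) + b < ∑ u ∈ range L, lam' u := by
      intro b hb
      calc (∑ u ∈ range t2, lam' u) + b < (∑ u ∈ range t2, lam' u) + lam' t2 := by omega
        _ = ∑ u ∈ range (t2+1), lam' u := (sum_range_succ _ _).symm
        _ ≤ ∑ u ∈ range L, lam' u := hSmono ht2'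
    rw [Finset.prod_congr rfl (fun b hb => Finset.prod_congr rfl fun a ha => by
      rw [hYab b (mem_range.mp hb) a (mem_range.mp ha)])]
    refine cross_block_eval q (w' t1 * w' t2) hq (lam' t1) (lam' t2) ?_
      (hd4 t1 t2 ht2' ht1').1 (hd4 t1 t2 ht2' ht1').2
    intro b hb a ha
    have h1 := hd1 ((∑ u ∈ range t1, lam' u) + a) ((∑ u ∈ range t2, lam' u) + b)
      (lt_of_lt_of_le (hilt a ha) (Nat.le_add_right _ _)) (hjlt b hb)
    rw [hYab b hb a ha] at h1
    exact h1
  rw [Finset.prod_congr rfl hdiag,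
    Finset.prod_congr rfl (fun t2 ht2 => Finset.prod_congr rfl (hcross t2 ht2))]
  have e1 : (∏ t ∈ range L, (q⁻¹)^(∑ b ∈ range (lam' t), b) *
        (((1 - q^(lam' t) * ((w' t)^2 / q)) / (1 - (w' t)^2/q)) *
          ((∏ i ∈ range (lam' t), (1 - (q^2)^i * ((w' t)^2/q))) /
           (∏ i ∈ range (lam' t), (1 - (q^2)^i * (w' t)^2)))))
      = (q⁻¹)^(∑ t ∈ range L, ∑ b ∈ range (lam' t), b) *
        ∏ t ∈ range L, (((1 - q^(lam' t) * ((w' t)^2 / q)) / (1 - (w' t)^2/q)) *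
          ((∏ i ∈ range (lam' t), (1 - (q^2)^i * ((w' t)^2/q))) /
           (∏ i ∈ range (lam' t), (1 - (q^2)^i * (w' t)^2)))) := by
    rw [Finset.prod_mul_distrib, Finset.prod_pow_eq_pow_sum]
  have e2a : ∀ t2 ∈ range L, (∏ t1 ∈ range t2, (q⁻¹)^(lam' t1 * lam' t2) *
        (((1 - q^(lam' t1) * (w' t1 * w' t2 / q)) * (1 - q^(lam' t2) * (w' t1 * w' t2 / q))) /
          ((1 - w' t1 * w' t2 / q) * (1 - q^(lam' t1 + lam' t2) * (w' t1 * w' t2 / q)))))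
      = (q⁻¹)^(∑ t1 ∈ range t2, lam' t1 * lam' t2) *
        ∏ t1 ∈ range t2,
          (((1 - q^(lam' t1) * (w' t1 * w' t2 / q)) * (1 - q^(lam' t2) * (w' t1 * w' t2 / q))) /
          ((1 - w' t1 * w' t2 / q) * (1 - q^(lam' t1 + lam' t2) * (w' t1 * w' t2 / q)))) :=
    fun t2 _ => by rw [Finset.prod_mul_distrib, Finset.prod_pow_eq_pow_sum]
  have e2 : (∏ t2 ∈ range L, ∏ t1 ∈ range t2, (q⁻¹)^(lam' t1 * lam' t2) *
        (((1 - q^(lam' t1) * (w' t1 * w' t2 / q)) * (1 - q^(lam' t2) * (w' t1 * w' t2 / q))) /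
          ((1 - w' t1 * w' t2 / q) * (1 - q^(lam' t1 + lam' t2) * (w' t1 * w' t2 / q)))))
      = (q⁻¹)^(∑ t2 ∈ range L, ∑ t1 ∈ range t2, lam' t1 * lam' t2) *
        ∏ t2 ∈ range L, ∏ t1 ∈ range t2,
          (((1 - q^(lam' t1) * (w' t1 * w' t2 / q)) * (1 - q^(lam' t2) * (w' t1 * w' t2 / q))) /
          ((1 - w' t1 * w' t2 / q) * (1 - q^(lam' t1 + lam' t2) * (w' t1 * w' t2 / q)))) := by
    rw [Finset.prod_congr rfl e2a, Finset.prod_mul_distrib, Finset.prod_pow_eq_pow_sum]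
  rw [e1, e2, ← exp_sum lam' L, pow_add]
  ring

lemma prefactor_eq (k : ℕ) (hk : 1 ≤ k) (q : ℝ) (hq0 : 0 < q) :
    ((q ^ (-(k : ℝ) ^ 2 / 2) : ℝ) : ℂ) * ((q ^ ((k : ℝ) / 2) : ℝ) : ℂ)
      = ((q:ℂ)⁻¹)^(∑ b ∈ range k, b) := by
  have hEk : (∑ b ∈ range k, b) * 2 = k * (k-1) := Finset.sum_range_id_mul_two k
  have hcast : ((∑ b ∈ range k, b : ℕ) : ℝ) * 2 = (k:ℝ) * ((k:ℝ) - 1) := by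
    have := congrArg (fun n : ℕ => (n : ℝ)) hEk
    push_cast [Nat.cast_sub hk] at this
    push_cast
    linarith
  have hexp : -(k : ℝ) ^ 2 / 2 + (k : ℝ) / 2 = -((∑ b ∈ range k, b : ℕ) : ℝ) := by
    nlinarith [hcast]
  have hreal : q ^ (-(k : ℝ) ^ 2 / 2) * q ^ ((k : ℝ) / 2)
      = (q ^ (∑ b ∈ range k, b))⁻¹ := by
    rw [← Real.rpow_add hq0, hexp, Real.rpow_neg hq0.le, Real.rpow_natCast]
  rw [← Complex.ofReal_mul, hreal]
  push_cast
  rw [inv_pow]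



/-- `s_j = λ_1 + ⋯ + λ_{j−1}` (0-based: the sum of the parts before the `j`-th one). -/
def sPart {ℓ : ℕ} (lam : Fin ℓ → ℕ) (j : Fin ℓ) : ℕ :=
  ∑ i ∈ Finset.univ.filter (fun i => i < j), lam i

/-- The `q`-Pochhammer symbol `(a; t)_n = (1−a)(1−ta)⋯(1−t^{n−1}a)`. -/
noncomputable def qPoch (a t : ℂ) (n : ℕ) : ℂ :=
  ∏ i ∈ Finset.range n, (1 - t ^ i * a)

/-- Lemma 7.5: evaluation of the substitution `Sub^q_λ` of
`∏_{i<j} (1 − y_i y_j)² / ((q − y_i y_j)(1 − q y_i y_j))` along the `q`-strings of a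
partition `λ ⊢ k`. -/
theorem q_string_substitution_typeBC_part
    (k : ℕ) (hk : 1 ≤ k) (q : ℝ) (hq0 : 0 < q) (hq1 : q < 1)
    (ℓ : ℕ) (lam : Fin ℓ → ℕ)
    (hpos : ∀ j, 0 < lam j) (hmono : ∀ i j : Fin ℓ, i ≤ j → lam j ≤ lam i)
    (hsum : ∑ j, lam j = k)
    (w : Fin ℓ → ℂ)
    (y : Fin k → ℂ)
    (hy : ∀ (j : Fin ℓ) (m : ℕ), m < lam j → ∀ h : sPart lam j + m < k,
      y ⟨sPart lam j + m, h⟩ = (q : ℂ) ^ m * w j)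
    (hden1 : ∀ i j : Fin k, i < j →
      (q : ℂ) - y i * y j ≠ 0 ∧ 1 - (q : ℂ) * (y i * y j) ≠ 0)
    (hden2 : ∀ j : Fin ℓ, 1 - (w j) ^ 2 / (q : ℂ) ≠ 0)
    (hden3 : ∀ j : Fin ℓ, qPoch ((w j) ^ 2) ((q : ℂ) ^ 2) (lam j) ≠ 0)
    (hden4 : ∀ i j : Fin ℓ, i < j →
      1 - w i * w j / (q : ℂ) ≠ 0 ∧
      1 - (q : ℂ) ^ (lam i + lam j) * (w i * w j / (q : ℂ)) ≠ 0) :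
    (∏ i : Fin k, ∏ j : Fin k,
      if i < j then
        (1 - y i * y j) ^ 2 / (((q : ℂ) - y i * y j) * (1 - (q : ℂ) * (y i * y j)))
      else 1)
    = ((q ^ (-(k : ℝ) ^ 2 / 2) : ℝ) : ℂ) * ((q ^ ((k : ℝ) / 2) : ℝ) : ℂ) *
      (∏ j : Fin ℓ,
        ((1 - (q : ℂ) ^ lam j * ((w j) ^ 2 / (q : ℂ))) / (1 - (w j) ^ 2 / (q : ℂ))) *
          (qPoch ((w j) ^ 2 / (q : ℂ)) ((q : ℂ) ^ 2) (lam j) /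
            qPoch ((w j) ^ 2) ((q : ℂ) ^ 2) (lam j))) *
      (∏ i : Fin ℓ, ∏ j : Fin ℓ,
        if i < j then
          ((1 - (q : ℂ) ^ lam i * (w i * w j / (q : ℂ))) *
            (1 - (q : ℂ) ^ lam j * (w i * w j / (q : ℂ)))) /
          ((1 - w i * w j / (q : ℂ)) *
            (1 - (q : ℂ) ^ (lam i + lam j) * (w i * w j / (q : ℂ))))
        else 1) := by
  classical
  have hqC : (q:ℂ) ≠ 0 := by
    simpa using ne_of_gt hq0
  set lam' : ℕ → ℕ := fun t => if h : t < ℓ then lam ⟨t,h⟩ else 0 with hlam'def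
  set w' : ℕ → ℂ := fun t => if h : t < ℓ then w ⟨t,h⟩ else 0 with hw'def
  set Y : ℕ → ℂ := fun n => if h : n < k then y ⟨n,h⟩ else 1 with hYdef
  have hlam2 : ∀ t (h : t < ℓ), lam' t = lam ⟨t,h⟩ := fun t h => by simp [hlam'def, h]
  have hw'2 : ∀ t (h : t < ℓ), w' t = w ⟨t,h⟩ := fun t h => by simp [hw'def, h]
  have hYe : ∀ (n : ℕ) (h : n < k), Y n = y ⟨n, h⟩ := fun n h => by simp [hYdef, h]
  have hSfin : ∀ j : Fin ℓ, (∑ u ∈ range j.val, lam' u) = sPart lam j := by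
    intro j
    have h1 : ∑ u ∈ range j.val, lam' u = ∑ u ∈ range ℓ, (if u < j.val then lam' u else 0) := by
      rw [← Finset.sum_filter]
      apply Finset.sum_congr _ (fun x _ => rfl)
      ext x
      simp only [mem_filter, mem_range]
      have := j.isLt
      omega
    rw [h1, ← Fin.sum_univ_eq_sum_range (fun u => if u < j.val then lam' u else 0) ℓ]
    rw [sPart, Finset.sum_filter]
    apply Finset.sum_congr rfl
    intro i _
    by_cases h : (i : ℕ) < (j : ℕ)
    · rw [if_pos h, if_pos (by exact h), hlam2 i.val i.isLt]
    · rw [if_neg h, if_neg (by exact h)]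
  have hSl : (∑ u ∈ range ℓ, lam' u) = k := by
    rw [← Fin.sum_univ_eq_sum_range (fun u => lam' u) ℓ, ← hsum]
    exact Finset.sum_congr rfl fun j _ => hlam2 j.val j.isLt
  have hYmain : ∀ t < ℓ, ∀ m < lam' t,
      Y ((∑ u ∈ range t, lam' u) + m) = (q:ℂ)^m * w' t := by
    intro t ht m hm
    have hmj : m < lam ⟨t, ht⟩ := by rw [← hlam2 t ht]; exact hm
    have hlt : sPart lam ⟨t, ht⟩ + m < k := by
      rw [← hSfin ⟨t, ht⟩, ← hSl]
      calc (∑ u ∈ range t, lam' u) + m < (∑ u ∈ range t, lam' u) + lam' t := by omega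
        _ = ∑ u ∈ range (t+1), lam' u := (sum_range_succ _ _).symm
        _ ≤ ∑ u ∈ range ℓ, lam' u := Finset.sum_le_sum_of_subset (range_subset_range.mpr ht)
    calc Y ((∑ u ∈ range t, lam' u) + m)
        = Y (sPart lam ⟨t, ht⟩ + m) := by rw [hSfin ⟨t, ht⟩]
      _ = y ⟨sPart lam ⟨t, ht⟩ + m, hlt⟩ := hYe _ hlt
      _ = (q:ℂ)^m * w ⟨t, ht⟩ := hy ⟨t, ht⟩ m hmj hlt
      _ = (q:ℂ)^m * w' t := by rw [hw'2 t ht]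
  have hd1main : ∀ i j : ℕ, i < j → j < (∑ u ∈ range ℓ, lam' u) →
      ((q:ℂ) - Y i * Y j ≠ 0 ∧ 1 - (q:ℂ) * (Y i * Y j) ≠ 0) := by
    intro i j hij hj
    rw [hSl] at hj
    have hi : i < k := lt_trans hij hj
    rw [hYe i hi, hYe j hj]
    exact hden1 ⟨i, hi⟩ ⟨j, hj⟩ (Fin.mk_lt_mk.mpr hij)
  have hd2main : ∀ t < ℓ, 1 - (w' t)^2 / (q:ℂ) ≠ 0 := fun t ht => by
    rw [hw'2 t ht]; exact hden2 ⟨t, ht⟩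
  have hd3main : ∀ t < ℓ,
      (∏ i ∈ range (lam' t), (1 - ((q:ℂ)^2)^i * (w' t)^2)) ≠ 0 := fun t ht => by
    have h3 := hden3 ⟨t, ht⟩
    rw [qPoch] at h3
    rw [hw'2 t ht, hlam2 t ht]
    exact h3
  have hd4main : ∀ t1 t2 : ℕ, t2 < ℓ → t1 < t2 →
      (1 - w' t1 * w' t2 / (q:ℂ) ≠ 0 ∧
        1 - (q:ℂ)^(lam' t1 + lam' t2) * (w' t1 * w' t2 / (q:ℂ)) ≠ 0) := by
    intro t1 t2 ht2 ht1
    have ht1ℓ : t1 < ℓ := lt_trans ht1 ht2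
    rw [hw'2 t1 ht1ℓ, hw'2 t2 ht2, hlam2 t1 ht1ℓ, hlam2 t2 ht2]
    exact hden4 ⟨t1, ht1ℓ⟩ ⟨t2, ht2⟩ (Fin.mk_lt_mk.mpr ht1)
  have hmain := main_range (q:ℂ) hqC ℓ lam' w' Y hYmain hd1main hd2main hd3main hd4main
  rw [hSl] at hmain
  have hL : (∏ i : Fin k, ∏ j : Fin k,
      if i < j then
        (1 - y i * y j) ^ 2 / (((q : ℂ) - y i * y j) * (1 - (q : ℂ) * (y i * y j)))
      else 1)
      = ∏ j ∈ range k, ∏ i ∈ range j,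
          ((1 - Y i * Y j)^2 / (((q:ℂ) - Y i * Y j) * (1 - (q:ℂ) * (Y i * Y j)))) := by
    rw [← pair_reorder k (fun i j =>
      (1 - Y i * Y j)^2 / (((q:ℂ) - Y i * Y j) * (1 - (q:ℂ) * (Y i * Y j))))]
    rw [← Fin.prod_univ_eq_prod_range (fun i => ∏ j ∈ range k,
      if i < j then
        (1 - Y i * Y j)^2 / (((q:ℂ) - Y i * Y j) * (1 - (q:ℂ) * (Y i * Y j)))
      else 1) k]
    refine Finset.prod_congr rfl fun i _ => ?_
    rw [← Fin.prod_univ_eq_prod_range (fun j =>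
      if (i:ℕ) < j then
        (1 - Y i * Y j)^2 / (((q:ℂ) - Y i * Y j) * (1 - (q:ℂ) * (Y i * Y j)))
      else 1) k]
    refine Finset.prod_congr rfl fun j _ => ?_
    rw [hYe i.val i.isLt, hYe j.val j.isLt]
    rfl
  have hD : (∏ j : Fin ℓ,
      ((1 - (q : ℂ) ^ lam j * ((w j) ^ 2 / (q : ℂ))) / (1 - (w j) ^ 2 / (q : ℂ))) *
        (qPoch ((w j) ^ 2 / (q : ℂ)) ((q : ℂ) ^ 2) (lam j) /
          qPoch ((w j) ^ 2) ((q : ℂ) ^ 2) (lam j)))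
      = ∏ t ∈ range ℓ, (((1 - (q:ℂ)^(lam' t) * ((w' t)^2 / (q:ℂ))) / (1 - (w' t)^2/(q:ℂ))) *
          ((∏ i ∈ range (lam' t), (1 - ((q:ℂ)^2)^i * ((w' t)^2/(q:ℂ)))) /
           (∏ i ∈ range (lam' t), (1 - ((q:ℂ)^2)^i * (w' t)^2)))) := by
    rw [← Fin.prod_univ_eq_prod_range (fun t =>
      ((1 - (q:ℂ)^(lam' t) * ((w' t)^2 / (q:ℂ))) / (1 - (w' t)^2/(q:ℂ))) *
        ((∏ i ∈ range (lam' t), (1 - ((q:ℂ)^2)^i * ((w' t)^2/(q:ℂ)))) /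
         (∏ i ∈ range (lam' t), (1 - ((q:ℂ)^2)^i * (w' t)^2)))) ℓ]
    refine Finset.prod_congr rfl fun j _ => ?_
    rw [hw'2 j.val j.isLt, hlam2 j.val j.isLt]
    rfl
  have hC : (∏ i : Fin ℓ, ∏ j : Fin ℓ,
      if i < j then
        ((1 - (q : ℂ) ^ lam i * (w i * w j / (q : ℂ))) *
          (1 - (q : ℂ) ^ lam j * (w i * w j / (q : ℂ)))) /
        ((1 - w i * w j / (q : ℂ)) *
          (1 - (q : ℂ) ^ (lam i + lam j) * (w i * w j / (q : ℂ))))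
      else 1)
      = ∏ t2 ∈ range ℓ, ∏ t1 ∈ range t2,
          (((1 - (q:ℂ)^(lam' t1) * (w' t1 * w' t2 / (q:ℂ))) *
            (1 - (q:ℂ)^(lam' t2) * (w' t1 * w' t2 / (q:ℂ)))) /
          ((1 - w' t1 * w' t2 / (q:ℂ)) *
            (1 - (q:ℂ)^(lam' t1 + lam' t2) * (w' t1 * w' t2 / (q:ℂ))))) := by
    rw [← pair_reorder ℓ (fun t1 t2 =>
      ((1 - (q:ℂ)^(lam' t1) * (w' t1 * w' t2 / (q:ℂ))) *
        (1 - (q:ℂ)^(lam' t2) * (w' t1 * w' t2 / (q:ℂ)))) /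
      ((1 - w' t1 * w' t2 / (q:ℂ)) *
        (1 - (q:ℂ)^(lam' t1 + lam' t2) * (w' t1 * w' t2 / (q:ℂ)))))]
    rw [← Fin.prod_univ_eq_prod_range (fun t1 => ∏ t2 ∈ range ℓ,
      if t1 < t2 then
        ((1 - (q:ℂ)^(lam' t1) * (w' t1 * w' t2 / (q:ℂ))) *
          (1 - (q:ℂ)^(lam' t2) * (w' t1 * w' t2 / (q:ℂ)))) /
        ((1 - w' t1 * w' t2 / (q:ℂ)) *
          (1 - (q:ℂ)^(lam' t1 + lam' t2) * (w' t1 * w' t2 / (q:ℂ))))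
      else 1) ℓ]
    refine Finset.prod_congr rfl fun i _ => ?_
    rw [← Fin.prod_univ_eq_prod_range (fun t2 =>
      if (i:ℕ) < t2 then
        ((1 - (q:ℂ)^(lam' (i:ℕ)) * (w' (i:ℕ) * w' t2 / (q:ℂ))) *
          (1 - (q:ℂ)^(lam' t2) * (w' (i:ℕ) * w' t2 / (q:ℂ)))) /
        ((1 - w' (i:ℕ) * w' t2 / (q:ℂ)) *
          (1 - (q:ℂ)^(lam' (i:ℕ) + lam' t2) * (w' (i:ℕ) * w' t2 / (q:ℂ))))
      else 1) ℓ]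
    refine Finset.prod_congr rfl fun j _ => ?_
    rw [hw'2 i.val i.isLt, hw'2 j.val j.isLt, hlam2 i.val i.isLt, hlam2 j.val j.isLt]
    rfl
  rw [hL, hmain, hD, hC, prefactor_eq k hk q hq0]
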